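/- Let (Λ, π, γ) be a quantified scenario such that some f ∈ F is minimal in F ∪ A with respect to ≺_Q (i.e. f ∈ Q_a for all a ∈ A), and let Λ^{f/0}, Λ^{f/1} be the reduced quantified scenarios obtained by substituting 0 (resp. 1) for the f-variable of φ and removing f. Then τ_m(Σ_Λ) = Ψ_F(τ_m(Σ_{Λ^{f/0}}), τ_m(Σ_{Λ^{f/1}}), π_f), where Ψ_F(I₁,I₂,p) = {((1−p)·p₁ + p·p₂, max(c₁,c₂)) : (p₁,c₁) ∈ I₁, (p₂,c₂) ∈ I₂}. -/
import Mathlib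


open scoped ENNReal

/-- A scenario `(F, A, φ, Q)`: `φ : 𝔹^F × 𝔹^A → 𝔹` is a Boolean function, and
`Q` assigns to each attack `a ∈ A` the subset `Q_a ⊆ F` of failures observable when
deciding about `a`; the family `{Q_a}` is totally ordered by inclusion. -/
structure Scenario (F A : Type) where
  φ : (F → Bool) → (A → Bool) → Bool
  Q : A → Finset F
  chain : ∀ a a' : A, Q a ⊆ Q a' ∨ Q a' ⊆ Q a

variable {F A : Type}

/-- A strategy: for each `a ∈ A`, a map `σ_a : 𝔹^{Q_a} → 𝔹`. -/
def Strategy (Λ : Scenario F A) : Type :=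
  (a : A) → ({f : F // f ∈ Λ.Q a} → Bool) → Bool

/-- The induced map `σ̂ : 𝔹^F → 𝔹^A`, `σ̂(x)_a = σ_a(x|_{Q_a})`. -/
def hatS (Λ : Scenario F A) (σ : Strategy Λ) (x : F → Bool) : A → Bool :=
  fun a => σ a fun f => x f.1

/-- The reduced scenario `Λ^{f/b}`: substitute `b` for the `f`-variable of `φ`,
remove `f` from `F`, and set `Q'_a = Q_a \ {f}`. -/
def Scenario.reduceF [DecidableEq F] (Λ : Scenario F A) (f : F) (b : Bool) :
    Scenario {g : F // g ≠ f} A where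
  φ := fun x y => Λ.φ (fun g => if h : g = f then b else x ⟨g, h⟩) y
  Q := fun a => (Λ.Q a).subtype (· ≠ f)
  chain := fun a a' => (Λ.chain a a').imp
    (fun h x hx => Finset.mem_subtype.mpr (h (Finset.mem_subtype.mp hx)))
    (fun h x hx => Finset.mem_subtype.mpr (h (Finset.mem_subtype.mp hx)))

/-- Restriction of `x ∈ 𝔹^{Q_a}` to `𝔹^{Q_a \ {f}}` (the `x'` of the paper). -/
def restr [DecidableEq F] (Λ : Scenario F A) (f : F) (b : Bool) (a : A)
    (x : {f' : F // f' ∈ Λ.Q a} → Bool) :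
    ({g // g ∈ (Λ.reduceF f b).Q a} → Bool) :=
  fun g => x ⟨g.1.1, Finset.mem_subtype.mp g.2⟩

/-- The composed strategy `σ⁰ ⋆ σ¹`, defined by
`(σ⁰ ⋆ σ¹)_a(x) = (¬x_f ∧ σ⁰_a(x')) ∨ (x_f ∧ σ¹_a(x'))`. -/
def star [DecidableEq F] (Λ : Scenario F A) (f : F) (hf : ∀ a, f ∈ Λ.Q a)
    (σ0 : Strategy (Λ.reduceF f false)) (σ1 : Strategy (Λ.reduceF f true)) :
    Strategy Λ := fun a x =>
  (!(x ⟨f, hf a⟩) && σ0 a (restr Λ f false a x)) ||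
    ((x ⟨f, hf a⟩) && σ1 a (restr Λ f true a x))

/-- Bernoulli weight of an outcome `x ∈ 𝔹^F`:
`(∏_{f : x_f = 1} π_f) · (∏_{f : x_f = 0} (1 - π_f))`. -/
noncomputable def wght [Fintype F] (π : F → ℝ≥0∞) (x : F → Bool) : ℝ≥0∞ :=
  ∏ f, if x f then π f else 1 - π f

/-- Success probability `π̂(σ)`: the probability that `φ(x, σ̂(x)) = 1` when the
coordinates `x_f` are independent Bernoulli(`π_f`). -/
noncomputable def probS [Fintype F] [DecidableEq F] (Λ : Scenario F A)
    (π : F → ℝ≥0∞) (σ : Strategy Λ) : ℝ≥0∞ :=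
  ∑ x : F → Bool, wght π x * (if Λ.φ x (hatS Λ σ x) then 1 else 0)

/-- Cost incurred by strategy `σ` upon observing `x`: `Σ_{a : σ̂(x)_a = 1} γ_a`. -/
noncomputable def costOf [Fintype A] (Λ : Scenario F A) (γ : A → ℝ≥0∞) (σ : Strategy Λ)
    (x : F → Bool) : ℝ≥0∞ :=
  ∑ a, if hatS Λ σ x a then γ a else 0

/-- Maximal cost `γ̂_m(σ) = max_{x ∈ 𝔹^F} Σ_{a : σ̂(x)_a = 1} γ_a`. -/
noncomputable def maxCost [Fintype F] [DecidableEq F] [Fintype A] (Λ : Scenario F A)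
    (γ : A → ℝ≥0∞) (σ : Strategy Λ) : ℝ≥0∞ :=
  ⨆ x : F → Bool, costOf Λ γ σ x

/-- Expected cost `γ̂_e(σ)`. -/
noncomputable def expCost [Fintype F] [DecidableEq F] [Fintype A] (Λ : Scenario F A)
    (π : F → ℝ≥0∞) (γ : A → ℝ≥0∞) (σ : Strategy Λ) : ℝ≥0∞ :=
  ∑ x : F → Bool, wght π x * costOf Λ γ σ x

/-- `ψ((p₁,c₁),(p₂,c₂),p) = ((1−p)·p₁ + p·p₂, max(c₁,c₂))`. -/
noncomputable def psi (d₁ d₂ : ℝ≥0∞ × ℝ≥0∞) (p : ℝ≥0∞) : ℝ≥0∞ × ℝ≥0∞ :=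
  ((1 - p) * d₁.1 + p * d₂.1, max d₁.2 d₂.2)

/-- `Ψ_F(I₁,I₂,p) = {ψ(d₁,d₂,p) : d₁ ∈ I₁, d₂ ∈ I₂}`. -/
noncomputable def PsiF (I₁ I₂ : Set (ℝ≥0∞ × ℝ≥0∞)) (p : ℝ≥0∞) : Set (ℝ≥0∞ × ℝ≥0∞) :=
  {d | ∃ d₁ ∈ I₁, ∃ d₂ ∈ I₂, d = psi d₁ d₂ p}


section Aux
variable [DecidableEq F]

/-- Extension of `x' ∈ 𝔹^{F \ {f}}` by value `b` at `f`. -/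
def extF (f : F) (b : Bool) (x' : {g : F // g ≠ f} → Bool) : F → Bool :=
  fun g => if h : g = f then b else x' ⟨g, h⟩

def extEquiv (f : F) : Bool × ({g : F // g ≠ f} → Bool) ≃ (F → Bool) where
  toFun p := extF f p.1 p.2
  invFun x := (x f, fun g => x g.1)
  left_inv := by
    rintro ⟨b, x'⟩
    refine Prod.ext (by simp [extF]) ?_
    funext g
    simp [extF, g.2]
  right_inv := by
    intro x
    funext g
    by_cases h : g = f <;> simp [extF, h]

lemma wght_extF [Fintype F] (π : F → ℝ≥0∞) (f : F) (b : Bool)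
    (x' : {g : F // g ≠ f} → Bool) :
    wght π (extF f b x') =
      (if b then π f else 1 - π f) * wght (fun g => π g.1) x' := by
  unfold wght
  rw [← Finset.mul_prod_erase Finset.univ _ (Finset.mem_univ f)]
  congr 1
  · simp [extF]
  · rw [Finset.prod_subtype (p := fun g => g ≠ f) (Finset.univ.erase f)
      (fun g => by simp) (fun g => if extF f b x' g then π g else 1 - π g)]
    refine Finset.prod_congr rfl fun g _ => ?_
    simp [extF, g.2]

lemma hatS_star_extF [Fintype F] (Λ : Scenario F A) (f : F) (hf : ∀ a, f ∈ Λ.Q a)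
    (σ0 : Strategy (Λ.reduceF f false)) (σ1 : Strategy (Λ.reduceF f true)) (b : Bool)
    (x' : {g : F // g ≠ f} → Bool) :
    hatS Λ (_root_.star Λ f hf σ0 σ1) (extF f b x') =
      if b then hatS (Λ.reduceF f true) σ1 x' else hatS (Λ.reduceF f false) σ0 x' := by
  have hx : ∀ (b' : Bool) (a : A),
      restr Λ f b' a (fun p : {f' : F // f' ∈ Λ.Q a} => extF f b x' p.1) = fun q => x' q.1 := by
    intro b' a
    funext q
    have hq : (q.1 : F) ≠ f := q.1.2
    simp [restr, extF, hq]
  funext a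
  have hfv : extF f b x' f = b := by simp [extF]
  cases b with
  | false =>
    show (((!(extF f false x' f)) &&
          σ0 a (restr Λ f false a fun p => extF f false x' p.1)) ||
        ((extF f false x' f) && σ1 a (restr Λ f true a fun p => extF f false x' p.1))) =
      σ0 a (fun q => x' q.1)
    rw [hx false a, hx true a, hfv]
    simp
  | true =>
    show (((!(extF f true x' f)) &&
          σ0 a (restr Λ f false a fun p => extF f true x' p.1)) ||
        ((extF f true x' f) && σ1 a (restr Λ f true a fun p => extF f true x' p.1))) =
      σ1 a (fun q => x' q.1)
    rw [hx false a, hx true a, hfv]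
    simp

lemma phi_reduceF (Λ : Scenario F A) (f : F) (b : Bool)
    (x' : {g : F // g ≠ f} → Bool) (y : A → Bool) :
    Λ.φ (extF f b x') y = (Λ.reduceF f b).φ x' y := rfl

lemma probS_split [Fintype F] [Fintype A] (Λ : Scenario F A) (π : F → ℝ≥0∞)
    (f : F) (σ : Strategy Λ)
    (σ0 : Strategy (Λ.reduceF f false)) (σ1 : Strategy (Λ.reduceF f true))
    (h0 : ∀ x', hatS Λ σ (extF f false x') = hatS (Λ.reduceF f false) σ0 x')
    (h1 : ∀ x', hatS Λ σ (extF f true x') = hatS (Λ.reduceF f true) σ1 x') :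
    probS Λ π σ =
      (1 - π f) * probS (Λ.reduceF f false) (fun g => π g.1) σ0 +
        π f * probS (Λ.reduceF f true) (fun g => π g.1) σ1 := by
  unfold probS
  rw [← Equiv.sum_comp (extEquiv f)
    (fun x => wght π x * (if Λ.φ x (hatS Λ σ x) then 1 else 0))]
  rw [Fintype.sum_prod_type, Fintype.sum_bool]
  simp only [extEquiv, Equiv.coe_fn_mk]
  rw [add_comm]
  congr 1
  · rw [Finset.mul_sum]
    refine Finset.sum_congr rfl fun x' _ => ?_
    simp only [wght_extF, h0, phi_reduceF]
    simp [mul_assoc]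
  · rw [Finset.mul_sum]
    refine Finset.sum_congr rfl fun x' _ => ?_
    simp only [wght_extF, h1, phi_reduceF]
    simp [mul_assoc]

lemma maxCost_split [Fintype F] [Fintype A] (Λ : Scenario F A) (γ : A → ℝ≥0∞)
    (f : F) (σ : Strategy Λ)
    (σ0 : Strategy (Λ.reduceF f false)) (σ1 : Strategy (Λ.reduceF f true))
    (h0 : ∀ x', hatS Λ σ (extF f false x') = hatS (Λ.reduceF f false) σ0 x')
    (h1 : ∀ x', hatS Λ σ (extF f true x') = hatS (Λ.reduceF f true) σ1 x') :
    maxCost Λ γ σ =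
      max (maxCost (Λ.reduceF f false) γ σ0) (maxCost (Λ.reduceF f true) γ σ1) := by
  unfold maxCost
  rw [← Equiv.iSup_comp (g := fun x => costOf Λ γ σ x) (extEquiv f)]
  rw [iSup_prod, iSup_bool_eq]
  simp only [extEquiv, Equiv.coe_fn_mk]
  rw [sup_comm]
  congr 1
  · refine iSup_congr fun x' => ?_
    unfold costOf
    rw [h0]
  · refine iSup_congr fun x' => ?_
    unfold costOf
    rw [h1]

/-- The restriction of a full strategy to a reduced one. -/
def restrStrat (Λ : Scenario F A) (f : F) (b : Bool) (hf : ∀ a, f ∈ Λ.Q a)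
    (σ : Strategy Λ) : Strategy (Λ.reduceF f b) := fun a x' =>
  σ a fun p => if h : p.1 = f then b else x' ⟨⟨p.1, h⟩, Finset.mem_subtype.mpr p.2⟩

lemma hatS_restrStrat [Fintype F] (Λ : Scenario F A) (f : F) (b : Bool)
    (hf : ∀ a, f ∈ Λ.Q a) (σ : Strategy Λ) (x' : {g : F // g ≠ f} → Bool) :
    hatS Λ σ (extF f b x') = hatS (Λ.reduceF f b) (restrStrat Λ f b hf σ) x' := by
  funext a
  show σ a _ = σ a _
  congr 1

end Aux

/-- `τ_m(Σ_Λ) = Ψ_F(τ_m(Σ_{Λ^{f/0}}), τ_m(Σ_{Λ^{f/1}}), π_f)`. -/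
theorem range_tauM_eq_psiF [Fintype F] [Fintype A] [DecidableEq F]
    (Λ : Scenario F A) (π : F → ℝ≥0∞) (hπ : ∀ g, π g ≤ 1) (γ : A → ℝ≥0∞)
    (f : F) (hf : ∀ a, f ∈ Λ.Q a) :
    Set.range (fun σ : Strategy Λ => (probS Λ π σ, maxCost Λ γ σ)) =
      PsiF
        (Set.range (fun σ0 : Strategy (Λ.reduceF f false) =>
          (probS (Λ.reduceF f false) (fun g => π g.1) σ0,
            maxCost (Λ.reduceF f false) γ σ0)))
        (Set.range (fun σ1 : Strategy (Λ.reduceF f true) =>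
          (probS (Λ.reduceF f true) (fun g => π g.1) σ1,
            maxCost (Λ.reduceF f true) γ σ1)))
        (π f) := by
  ext d
  constructor
  · rintro ⟨σ, rfl⟩
    refine ⟨_, ⟨restrStrat Λ f false hf σ, rfl⟩, _, ⟨restrStrat Λ f true hf σ, rfl⟩, ?_⟩
    refine Prod.ext ?_ ?_
    · exact probS_split Λ π f σ _ _ (hatS_restrStrat Λ f false hf σ)
        (hatS_restrStrat Λ f true hf σ)
    · exact maxCost_split Λ γ f σ _ _ (hatS_restrStrat Λ f false hf σ)
        (hatS_restrStrat Λ f true hf σ)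
  · rintro ⟨d1, ⟨σ0, rfl⟩, d2, ⟨σ1, rfl⟩, rfl⟩
    refine ⟨_root_.star Λ f hf σ0 σ1, ?_⟩
    have h0 : ∀ x', hatS Λ (_root_.star Λ f hf σ0 σ1) (extF f false x')
        = hatS (Λ.reduceF f false) σ0 x' := fun x' => by
      simpa using hatS_star_extF Λ f hf σ0 σ1 false x'
    have h1 : ∀ x', hatS Λ (_root_.star Λ f hf σ0 σ1) (extF f true x')
        = hatS (Λ.reduceF f true) σ1 x' := fun x' => by
      simpa using hatS_star_extF Λ f hf σ0 σ1 true x'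
    refine Prod.ext ?_ ?_
    · exact probS_split Λ π f _ _ _ h0 h1
    · exact maxCost_split Λ γ f _ _ _ h0 h1
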